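/- Let Ω ⊂ ℝ^{n+1} be connected and open, and suppose ∂Ω can be written as Z ∪ ⋃_j ∂Ω_j^{int} where H^n(Z) = 0 and each Ω_j^{int} ⊂ Ω is a bounded Lipschitz domain. Assume Dahlberg's theorem (for bounded Lipschitz domains, harmonic measure and surface measure are mutually absolutely continuous) and the maximum-principle inequality ω^X_Ω(F) ≥ ω^X_{Ω_j^{int}}(F ∩ ∂Ω_j^{int}) for X ∈ Ω_j^{int} and Borel F ⊂ ∂Ω. Then H^n⌞∂Ω is absolutely continuous with respect to harmonic measure ω^X of Ω for any fixed pole X ∈ Ω. -/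

import Mathlib

open Metric MeasureTheory Set Filter
open scoped Topology

noncomputable section

/-- If `∂Ω` is `H^n`-a.e. covered by boundaries of bounded Lipschitz subdomains of the
connected open set `Ω`, then (granting Dahlberg's theorem, the maximum principle, and
Harnack as hypotheses) `H^n ⌞ ∂Ω` is absolutely continuous with respect to harmonic
measure with any pole `X ∈ Ω`. -/
theorem stmt18 {n : ℕ}
    (Ω : Set (EuclideanSpace ℝ (Fin (n + 1)))) (hΩo : IsOpen Ω) (hΩc : IsConnected Ω)
    (O : ℕ → Set (EuclideanSpace ℝ (Fin (n + 1))))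
    (hOpen : ∀ j, IsOpen (O j)) (hConn : ∀ j, IsConnected (O j))
    (hBdd : ∀ j, Bornology.IsBounded (O j)) (hsub : ∀ j, O j ⊆ Ω)
    (Z : Set (EuclideanSpace ℝ (Fin (n + 1)))) (hZ : μH[(n : ℝ)] Z = 0)
    (hcover : frontier Ω ⊆ Z ∪ ⋃ j, frontier (O j))
    -- harmonic measure for `Ω` with pole `X`
    (ω : EuclideanSpace ℝ (Fin (n + 1)) → Measure (EuclideanSpace ℝ (Fin (n + 1))))
    -- harmonic measure for the Lipschitz subdomain `O j` with pole `X`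
    (ωd : ℕ → EuclideanSpace ℝ (Fin (n + 1)) → Measure (EuclideanSpace ℝ (Fin (n + 1))))
    -- Dahlberg's theorem: mutual absolute continuity on `∂(O j)`
    (hDahlberg : ∀ j, ∀ X ∈ O j, ∀ F : Set (EuclideanSpace ℝ (Fin (n + 1))),
      MeasurableSet F → F ⊆ frontier (O j) → (μH[(n : ℝ)] F = 0 ↔ ωd j X F = 0))
    -- the maximum principle
    (hmax : ∀ j, ∀ X ∈ O j, ∀ F : Set (EuclideanSpace ℝ (Fin (n + 1))),
      MeasurableSet F → F ⊆ frontier Ω → ωd j X (F ∩ frontier (O j)) ≤ ω X F)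
    -- Harnack: harmonic measures with different poles are mutually absolutely continuous
    (hHarnack : ∀ X ∈ Ω, ∀ Y ∈ Ω, ∀ F : Set (EuclideanSpace ℝ (Fin (n + 1))),
      MeasurableSet F → F ⊆ frontier Ω → (ω X F = 0 ↔ ω Y F = 0)) :
    ∀ X ∈ Ω, ∀ F : Set (EuclideanSpace ℝ (Fin (n + 1))),
      MeasurableSet F → F ⊆ frontier Ω → ω X F = 0 → μH[(n : ℝ)] F = 0 := by
  intro X hX F hF hFsub hω
  by_contra hH
  -- F \ Z is covered by the union of the frontiers of the O j
  have hcov : F \ Z ⊆ ⋃ j, F ∩ frontier (O j) := by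
    rintro x ⟨hxF, hxZ⟩
    rcases hcover (hFsub hxF) with h | h
    · exact absurd h hxZ
    · rcases mem_iUnion.1 h with ⟨j, hj⟩
      exact mem_iUnion.2 ⟨j, hxF, hj⟩
  have hFZ : μH[(n : ℝ)] (F \ Z) ≠ 0 := by
    intro h0
    apply hH
    have : μH[(n : ℝ)] F ≤ μH[(n : ℝ)] (F \ Z) + μH[(n : ℝ)] Z := by
      refine le_trans (measure_mono (fun x hx => ?_)) (measure_union_le _ _)
      by_cases hxZ : x ∈ Z
      · exact Or.inr hxZ
      · exact Or.inl ⟨hx, hxZ⟩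
    simpa [h0, hZ] using this
  have hU : μH[(n : ℝ)] (⋃ j, F ∩ frontier (O j)) ≠ 0 := fun h0 =>
    hFZ (measure_mono_null hcov h0)
  obtain ⟨j, hj⟩ : ∃ j, μH[(n : ℝ)] (F ∩ frontier (O j)) ≠ 0 := by
    by_contra h
    push_neg at h
    exact hU (measure_iUnion_null h)
  obtain ⟨Xj, hXj⟩ := (hConn j).nonempty
  have hmeas : MeasurableSet (F ∩ frontier (O j)) :=
    hF.inter isClosed_frontier.measurableSet
  have hωd : ωd j Xj (F ∩ frontier (O j)) ≠ 0 := fun h0 =>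
    hj ((hDahlberg j Xj hXj _ hmeas inter_subset_right).2 h0)
  have hωXj : ω Xj F ≠ 0 := by
    intro h0
    exact hωd (le_antisymm (h0 ▸ hmax j Xj hXj F hF hFsub) zero_le)
  exact hωXj ((hHarnack X hX Xj (hsub j hXj) F hF hFsub).1 hω)
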